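/- Let Fe, Fp : ℝ³ → Matrix (Fin 3) (Fin 3) ℝ be continuously differentiable matrix fields and suppose there exists a twice continuously differentiable map φ : ℝ³ → ℝ³ such that (Fe·Fp)(x) equals the Jacobian matrix of φ at x for every x (i.e., the total deformation F = Fe·Fp is compatible). Then for every x ∈ ℝ³, Fe(x)·(Fp×∇)(x) + Σ_{m=1}^{3} ((∂_m Fe)(x)·Fp(x)) × e_m = 0, where for a matrix M and standard basis vector e_m, (M×e_m)_{ij} = Σ_l ε_{jlm} M_{il}. -/

import Mathlib

/-- Levi-Civita symbol on three indices. -/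
noncomputable def eps (i j k : Fin 3) : ℝ :=
  (((j : ℕ) : ℝ) - ((i : ℕ) : ℝ)) * (((k : ℕ) : ℝ) - ((i : ℕ) : ℝ)) *
    (((k : ℕ) : ℝ) - ((j : ℕ) : ℝ)) / 2

/-- Partial derivative in the `k`-th standard coordinate direction. -/
noncomputable def pd (k : Fin 3) (f : EuclideanSpace ℝ (Fin 3) → ℝ)
    (x : EuclideanSpace ℝ (Fin 3)) : ℝ :=
  fderiv ℝ f x (EuclideanSpace.single k 1)

/-- The curl `T×∇` of a matrix field, `(T×∇)_{ij} = Σ_{k,l} ε_{jlk} ∂_k T_{il}`. -/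
noncomputable def mcurl (T : EuclideanSpace ℝ (Fin 3) → Matrix (Fin 3) (Fin 3) ℝ)
    (x : EuclideanSpace ℝ (Fin 3)) : Matrix (Fin 3) (Fin 3) ℝ :=
  Matrix.of fun i j => ∑ k, ∑ l, eps j l k * pd k (fun y => T y i l) x

/-- Cross product of a matrix with the `m`-th standard basis vector:
`(M×e_m)_{ij} = Σ_l ε_{jlm} M_{il}`. -/
noncomputable def crossE (M : Matrix (Fin 3) (Fin 3) ℝ) (m : Fin 3) :
    Matrix (Fin 3) (Fin 3) ℝ :=
  Matrix.of fun i j => ∑ l, eps j l m * M i l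

/-- The entrywise partial derivative `∂_m T` of a matrix field. -/
noncomputable def mpd (m : Fin 3) (T : EuclideanSpace ℝ (Fin 3) → Matrix (Fin 3) (Fin 3) ℝ)
    (x : EuclideanSpace ℝ (Fin 3)) : Matrix (Fin 3) (Fin 3) ℝ :=
  Matrix.of fun i l => pd m (fun y => T y i l) x

lemma eps_antisymm (j k l : Fin 3) : eps j k l = - eps j l k := by
  unfold eps; ring

lemma pd_sum {ι : Type*} (s : Finset ι) (f : ι → EuclideanSpace ℝ (Fin 3) → ℝ)
    {x : EuclideanSpace ℝ (Fin 3)}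
    (hf : ∀ a ∈ s, DifferentiableAt ℝ (f a) x) (k : Fin 3) :
    pd k (fun y => ∑ a ∈ s, f a y) x = ∑ a ∈ s, pd k (f a) x := by
  unfold pd
  rw [fderiv_fun_sum hf]
  simp

lemma pd_mul (f g : EuclideanSpace ℝ (Fin 3) → ℝ) {x : EuclideanSpace ℝ (Fin 3)}
    (hf : DifferentiableAt ℝ f x) (hg : DifferentiableAt ℝ g x) (k : Fin 3) :
    pd k (fun y => f y * g y) x = pd k f x * g x + f x * pd k g x := by
  unfold pd
  rw [fderiv_fun_mul hf hg]
  simp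
  ring

lemma pd_pd_symm (g : EuclideanSpace ℝ (Fin 3) → ℝ) (hg : ContDiff ℝ 2 g)
    (k l : Fin 3) (x : EuclideanSpace ℝ (Fin 3)) :
    pd k (fun y => pd l g y) x = pd l (fun y => pd k g y) x := by
  have hdf : DifferentiableAt ℝ (fderiv ℝ g) x := by
    have : ContDiff ℝ 1 (fderiv ℝ g) := (hg.fderiv_right (le_refl _))
    exact this.differentiable one_ne_zero x
  have hsymm : IsSymmSndFDerivAt ℝ g x :=
    hg.contDiffAt.isSymmSndFDerivAt (by simp)
  have key : ∀ v w : EuclideanSpace ℝ (Fin 3),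
      fderiv ℝ (fun y => fderiv ℝ g y v) x w = fderiv ℝ (fderiv ℝ g) x w v := by
    intro v w
    rw [fderiv_clm_apply hdf (differentiableAt_const v)]
    simp
  unfold pd
  rw [key, key, hsymm]


/-- Eq. (6) of the paper: expanding `Inc(Fe·Fp) = 0` by the Leibniz rule gives
`Fe·(Fp×∇) + Σ_m ((∂_m Fe)·Fp) × e_m = 0` when the total deformation is compatible. -/
theorem inc_decomposition_constraint
    (Fe Fp : EuclideanSpace ℝ (Fin 3) → Matrix (Fin 3) (Fin 3) ℝ)
    (hFe : ∀ i l, ContDiff ℝ 1 (fun x => Fe x i l))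
    (hFp : ∀ i l, ContDiff ℝ 1 (fun x => Fp x i l))
    (φ : EuclideanSpace ℝ (Fin 3) → EuclideanSpace ℝ (Fin 3)) (hφ : ContDiff ℝ 2 φ)
    (hcompat : ∀ x i j, (Fe x * Fp x) i j = pd j (fun z => φ z i) x)
    (x : EuclideanSpace ℝ (Fin 3)) :
    Fe x * mcurl Fp x + ∑ m, crossE (mpd m Fe x * Fp x) m = 0 := by
  have key : ∀ (i l k : Fin 3), pd k (fun y => (Fe y * Fp y) i l) x
      = ∑ a, (pd k (fun y => Fe y i a) x * Fp x a l
        + Fe x i a * pd k (fun y => Fp y a l) x) := by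
    intro i l k
    have h1 : (fun y => (Fe y * Fp y) i l) = fun y => ∑ a, Fe y i a * Fp y a l := by
      funext y; simp [Matrix.mul_apply]
    rw [h1, pd_sum _ _ (fun a _ =>
      ((hFe i a).differentiable one_ne_zero x).fun_mul ((hFp a l).differentiable one_ne_zero x))]
    exact Finset.sum_congr rfl fun a _ =>
      pd_mul _ _ ((hFe i a).differentiable one_ne_zero x) ((hFp a l).differentiable one_ne_zero x) k
  have zero : ∀ i j : Fin 3,
      ∑ k, ∑ l, eps j l k * pd k (fun y => (Fe y * Fp y) i l) x = 0 := by
    intro i j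
    have hg : ContDiff ℝ 2 (fun z => φ z i) :=
      (EuclideanSpace.proj (𝕜 := ℝ) i).contDiff.comp hφ
    have hrw : ∀ l : Fin 3, (fun y => (Fe y * Fp y) i l)
        = fun y => pd l (fun z => φ z i) y := by
      intro l; funext y; exact hcompat y i l
    set D : Fin 3 → Fin 3 → ℝ := fun k l => pd k (fun y => pd l (fun z => φ z i) y) x with hDdef
    have hD : ∀ k l : Fin 3, D k l = D l k := fun k l => pd_pd_symm _ hg k l x
    have hgoal : ∑ k, ∑ l, eps j l k * pd k (fun y => (Fe y * Fp y) i l) x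
        = ∑ k, ∑ l, eps j l k * D k l := by
      refine Finset.sum_congr rfl fun k _ => Finset.sum_congr rfl fun l _ => ?_
      rw [hrw l]
    rw [hgoal]
    have hneg : (∑ k, ∑ l, eps j l k * D k l) = -(∑ k, ∑ l, eps j l k * D k l) := by
      calc (∑ k, ∑ l, eps j l k * D k l) = ∑ l, ∑ k, eps j l k * D k l := Finset.sum_comm
        _ = ∑ l, ∑ k, -(eps j k l * D l k) := by
            refine Finset.sum_congr rfl fun l _ => Finset.sum_congr rfl fun k _ => ?_
            rw [eps_antisymm j k l, hD l k]; ring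
        _ = -(∑ k, ∑ l, eps j l k * D k l) := by
            simp [Finset.sum_neg_distrib]
    linarith
  ext i j
  have hz := zero i j
  simp only [key] at hz
  simp only [Matrix.add_apply, Matrix.zero_apply, Matrix.sum_apply, Matrix.mul_apply,
    mcurl, crossE, mpd, Matrix.of_apply]
  simp only [Fin.sum_univ_three] at hz ⊢
  linear_combination hz
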